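/- Let k ≥ 2 and j₀ ≥ 1 be integers, let n = k·2^{j₀−1}, let q be a probability distribution on [n], and let p = U_n. Then ‖q − p‖²_{[k]} ≤ 10⁸ · Σ_{j=0}^{j₀−1} Σ_{i=1}^{k·2^j} Discr(I_i^{(j)})² / width(I_i^{(j)})^{1/8}, where I^{(j)} = (I_i^{(j)})_{i=1}^{k·2^j} is the partition of [n] into k·2^j equal-length consecutive intervals. -/

import Mathlib

open Finset ProbabilityTheory MeasureTheory

/-- The probability mass that a function on `Fin n` assigns to the (0-indexed)
interval `[a, b)`. -/
noncomputable def intervalMass {n : ℕ} (q : Fin n → ℝ) (a b : ℕ) : ℝ :=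
  ∑ j ∈ Finset.univ.filter (fun j : Fin n => a ≤ (j : ℕ) ∧ (j : ℕ) < b), q j

/-- `q` is a probability distribution on `[n]` (identified with `Fin n`). -/
noncomputable def IsDist {n : ℕ} (q : Fin n → ℝ) : Prop := (∀ i, 0 ≤ q i) ∧ ∑ i, q i = 1

/-- The `A_k` distance between `p` and `q` on `Fin n`: the supremum, over all partitions of
`Fin n` into `k` consecutive intervals (described by their monotone sequence of boundary
points), of the sum of the discrepancies `|p(I) - q(I)|` over the intervals. -/
noncomputable def AkDist (n k : ℕ) (p q : Fin n → ℝ) : ℝ :=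
  sSup { x : ℝ | ∃ b : Fin (k + 1) → ℕ, Monotone b ∧ b 0 = 0 ∧ b (Fin.last k) = n ∧
    x = ∑ i : Fin k,
      |intervalMass p (b i.castSucc) (b i.succ) - intervalMass q (b i.castSucc) (b i.succ)| }

/-- The `L1` distance between two functions on `Fin n`. -/
noncomputable def L1Dist {n : ℕ} (p q : Fin n → ℝ) : ℝ := ∑ i, |p i - q i|

/-- The `L2` distance between two functions on `Fin n`. -/
noncomputable def L2Dist {n : ℕ} (p q : Fin n → ℝ) : ℝ := Real.sqrt (∑ i, (p i - q i) ^ 2)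

/-- The uniform distribution on `Fin n`. -/
noncomputable def unif (n : ℕ) : Fin n → ℝ := fun _ => 1 / n

/-- The probability that the `m`-fold product measure `q^{⊗m}` assigns to a set
`A ⊆ [n]^m` of sample sequences. -/
noncomputable def prodProb {n m : ℕ} (q : Fin n → ℝ) (A : Finset (Fin m → Fin n)) : ℝ :=
  ∑ x ∈ A, ∏ j, q (x j)

/-- The reduced distribution of `q` w.r.t. the partition of `Fin n` into `ℓ` consecutive
intervals of equal length `n / ℓ` (assuming `ℓ ∣ n`). -/
noncomputable def reducedDist {n : ℕ} (q : Fin n → ℝ) (ℓ : ℕ) : Fin ℓ → ℝ :=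
  fun i => intervalMass q ((i : ℕ) * (n / ℓ)) (((i : ℕ) + 1) * (n / ℓ))

/-- `p` is a `t`-piecewise degree-`d` function on `Fin n`: there is a partition of `Fin n`
into `t` consecutive intervals on each of which `p` agrees with a real polynomial of degree
at most `d`. -/
noncomputable def IsPiecewisePoly {n : ℕ} (t d : ℕ) (p : Fin n → ℝ) : Prop :=
  ∃ b : Fin (t + 1) → ℕ, Monotone b ∧ b 0 = 0 ∧ b (Fin.last t) = n ∧
    ∀ i : Fin t, ∃ P : Polynomial ℝ, P.degree ≤ (d : ℕ) ∧
      ∀ x : Fin n, b i.castSucc ≤ (x : ℕ) → (x : ℕ) < b i.succ → p x = P.eval ((x : ℕ) : ℝ)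

/-- `q` is `k`-flat: there is a partition of `Fin n` into `k` consecutive intervals
on each of which `q` is constant. -/
noncomputable def IsKFlat {n : ℕ} (k : ℕ) (q : Fin n → ℝ) : Prop :=
  ∃ b : Fin (k + 1) → ℕ, Monotone b ∧ b 0 = 0 ∧ b (Fin.last k) = n ∧
    ∀ i : Fin k, ∃ c : ℝ, ∀ x : Fin n, b i.castSucc ≤ (x : ℕ) → (x : ℕ) < b i.succ → q x = c

/-- The term `Discr(I)² / width(I)^{1/8}` for the interval `I = [a, b)` in `Fin n`, where
the discrepancy is `Discr(I) = |q(I) - U_n(I)|` and the width is `|I|/n` (relative to the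
uniform distribution `U_n`). -/
noncomputable def ssTerm {n : ℕ} (q : Fin n → ℝ) (a b : ℕ) : ℝ :=
  |intervalMass q a b - ((b - a : ℕ) : ℝ) / n| ^ 2 / (((b - a : ℕ) : ℝ) / n) ^ ((1 : ℝ) / 8)

/-- The squared scale-sensitive-`L2` distance between `q` and the uniform distribution
on `Fin n`, at scale `1/k`: the supremum, over all partitions of `Fin n` into consecutive
nonempty intervals each of width at most `1/k`, of `∑ Discr(I)² / width(I)^{1/8}`. -/
noncomputable def ssDistSq (n k : ℕ) (q : Fin n → ℝ) : ℝ :=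
  sSup { x : ℝ | ∃ r : ℕ, ∃ b : Fin (r + 1) → ℕ, StrictMono b ∧ b 0 = 0 ∧ b (Fin.last r) = n ∧
    (∀ i : Fin r, ((b i.succ - b i.castSucc : ℕ) : ℝ) / n ≤ 1 / k) ∧
    x = ∑ i : Fin r, ssTerm q (b i.castSucc) (b i.succ) }

/- ### Auxiliary lemmas -/


lemma half_rpow_le : ((1:ℝ)/2) ^ ((1:ℝ)/8) ≤ 0.92 := by
  have h0 : (0:ℝ) ≤ ((1:ℝ)/2) ^ ((1:ℝ)/8) := Real.rpow_nonneg (by norm_num) _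
  have h8 : (((1:ℝ)/2) ^ ((1:ℝ)/8)) ^ (8:ℕ) = (1:ℝ)/2 := by
    rw [← Real.rpow_natCast (((1:ℝ)/2) ^ ((1:ℝ)/8)) 8, ← Real.rpow_mul (by norm_num)]
    norm_num
  nlinarith [h8, sq_nonneg (((1:ℝ)/2) ^ ((1:ℝ)/8) - 0.92), sq_nonneg ((((1:ℝ)/2) ^ ((1:ℝ)/8))^2 - 0.92^2), sq_nonneg ((((1:ℝ)/2) ^ ((1:ℝ)/8))^4 - 0.92^4)]

lemma coreA (x c d : ℝ) (hc : 0 < c) (hcd : c ≤ d) :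
    x ^ 2 / d ^ ((1:ℝ)/8) ≤ x ^ 2 / c ^ ((1:ℝ)/8) := by
  apply div_le_div_of_nonneg_left (by positivity) (Real.rpow_pos_of_pos hc _)
  exact Real.rpow_le_rpow hc.le hcd (by norm_num)

lemma coreB (x c d : ℝ) (hc : 0 < c) (hcd : 2 * c ≤ d) :
    x ^ 2 / d ^ ((1:ℝ)/8) ≤ 0.92 * (x ^ 2 / c ^ ((1:ℝ)/8)) := by
  have hd : 0 < d := lt_of_lt_of_le (by linarith) hcd
  have hcp : (0:ℝ) < c ^ ((1:ℝ)/8) := Real.rpow_pos_of_pos hc _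
  have hdp : (0:ℝ) < d ^ ((1:ℝ)/8) := Real.rpow_pos_of_pos hd _
  have key : c ^ ((1:ℝ)/8) ≤ 0.92 * d ^ ((1:ℝ)/8) := by
    have h1 : c ^ ((1:ℝ)/8) = ((1:ℝ)/2) ^ ((1:ℝ)/8) * (2*c) ^ ((1:ℝ)/8) := by
      rw [← Real.mul_rpow (by norm_num) (by positivity)]
      congr 1
      ring
    have h2 : (2*c) ^ ((1:ℝ)/8) ≤ d ^ ((1:ℝ)/8) :=
      Real.rpow_le_rpow (by positivity) hcd (by norm_num)
    rw [h1]
    exact mul_le_mul half_rpow_le h2 (by positivity) (by norm_num)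
  rw [div_le_iff₀ hdp]
  calc x ^ 2 = (x^2 / c ^ ((1:ℝ)/8)) * c ^ ((1:ℝ)/8) := by field_simp
    _ ≤ (x^2 / c ^ ((1:ℝ)/8)) * (0.92 * d ^ ((1:ℝ)/8)) :=
        mul_le_mul_of_nonneg_left key (by positivity)
    _ = 0.92 * (x ^ 2 / c ^ ((1:ℝ)/8)) * d ^ ((1:ℝ)/8) := by ring

lemma sq_split (x y : ℝ) : (x + y)^2 ≤ 21 * x^2 + 1.05 * y^2 := by
  nlinarith [sq_nonneg (20*x - y)]

lemma ssTerm_nonneg {n : ℕ} (q : Fin n → ℝ) (a b : ℕ) : 0 ≤ ssTerm q a b := by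
  unfold ssTerm
  apply div_nonneg (by positivity)
  apply Real.rpow_nonneg
  positivity

lemma intervalMass_add {n : ℕ} (q : Fin n → ℝ) (a m b : ℕ) (h1 : a ≤ m) (h2 : m ≤ b) :
    intervalMass q a b = intervalMass q a m + intervalMass q m b := by
  unfold intervalMass
  rw [← Finset.sum_union]
  · congr 1
    ext j
    simp only [Finset.mem_union, Finset.mem_filter, Finset.mem_univ, true_and]
    omega
  · rw [Finset.disjoint_left]
    intro j hj hj'
    simp only [Finset.mem_filter, Finset.mem_univ, true_and] at hj hj'
    omega

lemma discr_le {n : ℕ} (q : Fin n → ℝ) (a m b : ℕ) (h1 : a ≤ m) (h2 : m ≤ b) :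
    |intervalMass q a b - ((b - a : ℕ) : ℝ) / n| ≤
      |intervalMass q a m - ((m - a : ℕ) : ℝ) / n| + |intervalMass q m b - ((b - m : ℕ) : ℝ) / n| := by
  rw [intervalMass_add q a m b h1 h2]
  have hc : ((b - a : ℕ) : ℝ) = ((m - a : ℕ) : ℝ) + ((b - m : ℕ) : ℝ) := by
    push_cast [Nat.cast_sub h1, Nat.cast_sub h2, Nat.cast_sub (h1.trans h2)]
    ring
  rw [hc]
  have := abs_add_le (intervalMass q a m - ((m - a : ℕ) : ℝ) / n)
    (intervalMass q m b - ((b - m : ℕ) : ℝ) / n)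
  calc _ = |(intervalMass q a m - ((m - a : ℕ) : ℝ) / n) + (intervalMass q m b - ((b - m : ℕ) : ℝ) / n)| := by ring_nf
    _ ≤ _ := this

section
variable {n : ℕ} (q : Fin n → ℝ) (hn : 0 < n)

-- widths
lemma width_pos {a b : ℕ} (h : a < b) (hn : 0 < n) : (0:ℝ) < ((b - a : ℕ) : ℝ) / n := by
  apply div_pos _ (by exact_mod_cast hn)
  exact_mod_cast Nat.sub_pos_of_lt h

lemma width_add {a m b : ℕ} (h1 : a ≤ m) (h2 : m ≤ b) :
    ((b - a : ℕ) : ℝ) / n = ((m - a : ℕ) : ℝ) / n + ((b - m : ℕ) : ℝ) / n := by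
  rw [← add_div]
  congr 1
  push_cast [Nat.cast_sub h1, Nat.cast_sub h2, Nat.cast_sub (h1.trans h2)]
  ring

/-- rest `[a,m)` is small (at most half), block `[m,b)` on the right. -/
lemma stepR {a m b : ℕ} (h1 : a < m) (h2 : m < b) (hsmall : 2 * (m - a) ≤ b - a)
    (hn : 0 < n) :
    ssTerm q a b ≤ 0.97 * ssTerm q a m + 21 * ssTerm q m b := by
  set y := |intervalMass q a m - ((m - a : ℕ) : ℝ) / n| with hy
  set x := |intervalMass q m b - ((b - m : ℕ) : ℝ) / n| with hx
  set w1 : ℝ := ((m - a : ℕ) : ℝ) / n with hw1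
  set w2 : ℝ := ((b - m : ℕ) : ℝ) / n with hw2
  set w : ℝ := ((b - a : ℕ) : ℝ) / n with hw
  have hww : w = w1 + w2 := width_add h1.le h2.le
  have hw1p : 0 < w1 := width_pos h1 hn
  have hw2p : 0 < w2 := width_pos h2 hn
  have hwp : 0 < w := by rw [hww]; linarith
  have hwr : (0:ℝ) < w ^ ((1:ℝ)/8) := Real.rpow_pos_of_pos hwp _
  have hD : |intervalMass q a b - ((b - a : ℕ) : ℝ) / n| ≤ y + x :=
    discr_le q a m b h1.le h2.le
  have habs : (0:ℝ) ≤ |intervalMass q a b - ((b - a : ℕ) : ℝ) / n| := abs_nonneg _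
  have hsm : 2 * w1 ≤ w := by
    have h2' : (2:ℝ) * ((m - a : ℕ):ℝ) ≤ ((b - a : ℕ):ℝ) := by exact_mod_cast hsmall
    rw [hw1, hw, ← mul_div_assoc]
    gcongr
  calc ssTerm q a b
      = |intervalMass q a b - ((b - a : ℕ) : ℝ) / n| ^ 2 / w ^ ((1:ℝ)/8) := rfl
    _ ≤ (y + x) ^ 2 / w ^ ((1:ℝ)/8) := by
        exact (div_le_div_iff_of_pos_right hwr).2 (pow_le_pow_left₀ habs hD 2)
    _ ≤ (21 * x^2 + 1.05 * y^2) / w ^ ((1:ℝ)/8) := by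
        have := sq_split x y
        have h' : (y + x)^2 ≤ 21 * x^2 + 1.05 * y^2 := by nlinarith [this]
        exact (div_le_div_iff_of_pos_right hwr).2 h'
    _ = 21 * (x^2 / w ^ ((1:ℝ)/8)) + 1.05 * (y^2 / w ^ ((1:ℝ)/8)) := by ring
    _ ≤ 21 * (x^2 / w2 ^ ((1:ℝ)/8)) + 1.05 * (0.92 * (y^2 / w1 ^ ((1:ℝ)/8))) := by
        have hA := coreA x w2 w hw2p (by linarith)
        have hB := coreB y w1 w hw1p hsm
        nlinarith [hA, hB]
    _ ≤ 0.97 * ssTerm q a m + 21 * ssTerm q m b := by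
        have e1 : ssTerm q a m = y^2 / w1 ^ ((1:ℝ)/8) := rfl
        have e2 : ssTerm q m b = x^2 / w2 ^ ((1:ℝ)/8) := rfl
        have := ssTerm_nonneg q a m
        rw [e1] at this ⊢
        rw [e2]
        nlinarith [this]

/-- block `[a,m)` on the left, rest `[m,b)` is small (at most half). -/
lemma stepL {a m b : ℕ} (h1 : a < m) (h2 : m < b) (hsmall : 2 * (b - m) ≤ b - a)
    (hn : 0 < n) :
    ssTerm q a b ≤ 21 * ssTerm q a m + 0.97 * ssTerm q m b := by
  set x := |intervalMass q a m - ((m - a : ℕ) : ℝ) / n| with hx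
  set y := |intervalMass q m b - ((b - m : ℕ) : ℝ) / n| with hy
  set w1 : ℝ := ((m - a : ℕ) : ℝ) / n with hw1
  set w2 : ℝ := ((b - m : ℕ) : ℝ) / n with hw2
  set w : ℝ := ((b - a : ℕ) : ℝ) / n with hw
  have hww : w = w1 + w2 := width_add h1.le h2.le
  have hw1p : 0 < w1 := width_pos h1 hn
  have hw2p : 0 < w2 := width_pos h2 hn
  have hwp : 0 < w := by rw [hww]; linarith
  have hwr : (0:ℝ) < w ^ ((1:ℝ)/8) := Real.rpow_pos_of_pos hwp _
  have hD : |intervalMass q a b - ((b - a : ℕ) : ℝ) / n| ≤ x + y :=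
    discr_le q a m b h1.le h2.le
  have habs : (0:ℝ) ≤ |intervalMass q a b - ((b - a : ℕ) : ℝ) / n| := abs_nonneg _
  have hsm : 2 * w2 ≤ w := by
    have h2' : (2:ℝ) * ((b - m : ℕ):ℝ) ≤ ((b - a : ℕ):ℝ) := by exact_mod_cast hsmall
    rw [hw2, hw, ← mul_div_assoc]
    gcongr
  calc ssTerm q a b
      = |intervalMass q a b - ((b - a : ℕ) : ℝ) / n| ^ 2 / w ^ ((1:ℝ)/8) := rfl
    _ ≤ (x + y) ^ 2 / w ^ ((1:ℝ)/8) := by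
        exact (div_le_div_iff_of_pos_right hwr).2 (pow_le_pow_left₀ habs hD 2)
    _ ≤ (21 * x^2 + 1.05 * y^2) / w ^ ((1:ℝ)/8) := by
        exact (div_le_div_iff_of_pos_right hwr).2 (sq_split x y)
    _ = 21 * (x^2 / w ^ ((1:ℝ)/8)) + 1.05 * (y^2 / w ^ ((1:ℝ)/8)) := by ring
    _ ≤ 21 * (x^2 / w1 ^ ((1:ℝ)/8)) + 1.05 * (0.92 * (y^2 / w2 ^ ((1:ℝ)/8))) := by
        have hA := coreA x w1 w hw1p (by linarith)
        have hB := coreB y w2 w hw2p hsm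
        nlinarith [hA, hB]
    _ ≤ 21 * ssTerm q a m + 0.97 * ssTerm q m b := by
        have e1 : ssTerm q a m = x^2 / w1 ^ ((1:ℝ)/8) := rfl
        have e2 : ssTerm q m b = y^2 / w2 ^ ((1:ℝ)/8) := rfl
        have := ssTerm_nonneg q m b
        rw [e2] at this ⊢
        rw [e1]
        nlinarith [this]

/-- crude split into two halves. -/
lemma stepM {a m b : ℕ} (h1 : a < m) (h2 : m < b) (hn : 0 < n) :
    ssTerm q a b ≤ 2 * ssTerm q a m + 2 * ssTerm q m b := by
  set x := |intervalMass q a m - ((m - a : ℕ) : ℝ) / n| with hx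
  set y := |intervalMass q m b - ((b - m : ℕ) : ℝ) / n| with hy
  set w1 : ℝ := ((m - a : ℕ) : ℝ) / n with hw1
  set w2 : ℝ := ((b - m : ℕ) : ℝ) / n with hw2
  set w : ℝ := ((b - a : ℕ) : ℝ) / n with hw
  have hww : w = w1 + w2 := width_add h1.le h2.le
  have hw1p : 0 < w1 := width_pos h1 hn
  have hw2p : 0 < w2 := width_pos h2 hn
  have hwp : 0 < w := by rw [hww]; linarith
  have hwr : (0:ℝ) < w ^ ((1:ℝ)/8) := Real.rpow_pos_of_pos hwp _
  have hD : |intervalMass q a b - ((b - a : ℕ) : ℝ) / n| ≤ x + y :=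
    discr_le q a m b h1.le h2.le
  have habs : (0:ℝ) ≤ |intervalMass q a b - ((b - a : ℕ) : ℝ) / n| := abs_nonneg _
  calc ssTerm q a b
      = |intervalMass q a b - ((b - a : ℕ) : ℝ) / n| ^ 2 / w ^ ((1:ℝ)/8) := rfl
    _ ≤ (x + y) ^ 2 / w ^ ((1:ℝ)/8) := by
        exact (div_le_div_iff_of_pos_right hwr).2 (pow_le_pow_left₀ habs hD 2)
    _ ≤ (2 * x^2 + 2 * y^2) / w ^ ((1:ℝ)/8) := by
        exact (div_le_div_iff_of_pos_right hwr).2 (by nlinarith [sq_nonneg (x - y)])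
    _ = 2 * (x^2 / w ^ ((1:ℝ)/8)) + 2 * (y^2 / w ^ ((1:ℝ)/8)) := by ring
    _ ≤ 2 * (x^2 / w1 ^ ((1:ℝ)/8)) + 2 * (y^2 / w2 ^ ((1:ℝ)/8)) := by
        have hA := coreA x w1 w hw1p (by linarith)
        have hB := coreA y w2 w hw2p (by linarith)
        nlinarith [hA, hB]
    _ = 2 * ssTerm q a m + 2 * ssTerm q m b := rfl

end

/-- term of the dyadic interval at level `p.1`, index `p.2`. -/
noncomputable def dyT {n : ℕ} (q : Fin n → ℝ) (j₀ : ℕ) (p : (_ : ℕ) × ℕ) : ℝ :=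
  ssTerm q (p.2 * 2 ^ (j₀ - 1 - p.1)) ((p.2 + 1) * 2 ^ (j₀ - 1 - p.1))

def dyIdx (k j₀ : ℕ) : Finset ((_ : ℕ) × ℕ) := (Finset.range j₀).sigma fun j => Finset.range (k * 2 ^ j)

def dyF (k j₀ a b : ℕ) : Finset ((_ : ℕ) × ℕ) :=
  (dyIdx k j₀).filter fun p => a ≤ p.2 * 2 ^ (j₀ - 1 - p.1) ∧ (p.2 + 1) * 2 ^ (j₀ - 1 - p.1) ≤ b

noncomputable def dySum (j₀ : ℕ) {n : ℕ} (q : Fin n → ℝ) (F : Finset ((_ : ℕ) × ℕ)) : ℝ :=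
  ∑ p ∈ F, dyT q j₀ p

lemma dySum_nonneg (j₀ : ℕ) {n : ℕ} (q : Fin n → ℝ) (F : Finset ((_ : ℕ) × ℕ)) : 0 ≤ dySum j₀ q F :=
  Finset.sum_nonneg fun p _ => ssTerm_nonneg q _ _

lemma dySum_mono (j₀ : ℕ) {n : ℕ} (q : Fin n → ℝ) {F G : Finset ((_ : ℕ) × ℕ)} (h : F ⊆ G) : dySum j₀ q F ≤ dySum j₀ q G :=
  Finset.sum_le_sum_of_subset_of_nonneg h fun p _ _ => ssTerm_nonneg q _ _

lemma mem_dyF (k j₀ : ℕ) {a b : ℕ} {p : (_ : ℕ) × ℕ} :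
    p ∈ dyF k j₀ a b ↔ (p.1 < j₀ ∧ p.2 < k * 2 ^ p.1) ∧
      a ≤ p.2 * 2 ^ (j₀ - 1 - p.1) ∧ (p.2 + 1) * 2 ^ (j₀ - 1 - p.1) ≤ b := by
  unfold dyF dyIdx
  simp [Finset.mem_filter, Finset.mem_sigma]

lemma dyF_subset (k j₀ : ℕ) {a a' b b' : ℕ} (ha : a' ≤ a) (hb : b ≤ b') : dyF k j₀ a b ⊆ dyF k j₀ a' b' := by
  intro p hp
  rw [mem_dyF] at hp ⊢
  exact ⟨hp.1, le_trans ha hp.2.1, le_trans hp.2.2 hb⟩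

lemma dyF_union_le (k j₀ : ℕ) {n : ℕ} (q : Fin n → ℝ) {a m b : ℕ} (h1 : a ≤ m) (h2 : m ≤ b) :
    dySum j₀ q (dyF k j₀ a m) + dySum j₀ q (dyF k j₀ m b) ≤ dySum j₀ q (dyF k j₀ a b) := by
  have hdisj : Disjoint (dyF k j₀ a m) (dyF k j₀ m b) := by
    rw [Finset.disjoint_left]
    intro p hp hp'
    rw [mem_dyF] at hp hp'
    have hL : 0 < 2 ^ (j₀ - 1 - p.1) := Nat.pow_pos (by norm_num)
    have := hp.2.2
    have := hp'.2.1
    nlinarith [hp.2.2, hp'.2.1, hL]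
  rw [dySum, dySum, dySum, ← Finset.sum_union hdisj]
  apply Finset.sum_le_sum_of_subset_of_nonneg
  · intro p hp
    rcases Finset.mem_union.1 hp with h | h
    · exact dyF_subset k j₀ le_rfl h2 h
    · exact dyF_subset k j₀ h1 le_rfl h
  · exact fun p _ _ => ssTerm_nonneg q _ _

/-- a dyadic interval `[a,b)` itself: `b - a = 2^s`, `2^s ∣ b`. -/
lemma dyadic_base (k j₀ : ℕ) {n : ℕ} (q : Fin n → ℝ) (hk : 1 ≤ k) (hj₀ : 1 ≤ j₀) {s a b : ℕ} (hs : s ≤ j₀ - 1)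
    (hab : b - a = 2 ^ s) (hd : 2 ^ s ∣ b) (ha : a < b) (hbn : b ≤ k * 2 ^ (j₀ - 1)) :
    ssTerm q a b ≤ 1000 * dySum j₀ q (dyF k j₀ a b) := by
  have hL : 0 < 2 ^ s := Nat.pow_pos (by norm_num)
  have hda : 2 ^ s ∣ a := by
    have : a = b - 2 ^ s := by omega
    rw [this]
    exact Nat.dvd_sub hd dvd_rfl
  set i := a / 2 ^ s with hi
  have hia : i * 2 ^ s = a := Nat.div_mul_cancel hda
  have hib : (i + 1) * 2 ^ s = b := by rw [add_mul, one_mul, hia]; try omega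
  set j := j₀ - 1 - s with hj
  have hjs : j₀ - 1 - j = s := by omega
  have hjlt : j < j₀ := by omega
  have hikey : i < k * 2 ^ j := by
    have hn' : k * 2 ^ (j₀ - 1) = k * 2 ^ j * 2 ^ s := by
      rw [mul_assoc, ← pow_add]
      congr 2
      omega
    have : (i + 1) * 2 ^ s ≤ k * 2 ^ j * 2 ^ s := by rw [hib, ← hn']; exact hbn
    have := Nat.le_of_mul_le_mul_right this hL
    omega
  have hmem : (⟨j, i⟩ : (_ : ℕ) × ℕ) ∈ dyF k j₀ a b := by
    rw [mem_dyF]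
    refine ⟨⟨hjlt, hikey⟩, ?_, ?_⟩ <;> simp only [hjs] <;> omega
  have hterm : dyT q j₀ ⟨j, i⟩ = ssTerm q a b := by
    unfold dyT
    simp only [hjs, hia, hib]
  have hsum : dyT q j₀ ⟨j, i⟩ ≤ dySum j₀ q (dyF k j₀ a b) :=
    Finset.single_le_sum (f := dyT q j₀) (fun p _ => ssTerm_nonneg q _ _) hmem
  have h0 := dySum_nonneg j₀ q (dyF k j₀ a b)
  rw [← hterm]
  linarith

/-- suffix of a dyadic block: `2^s ∣ b`, `b - a ≤ 2^s`. -/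
lemma suffix_bound (k j₀ : ℕ) {n : ℕ} (q : Fin n → ℝ) (hk : 1 ≤ k) (hj₀ : 1 ≤ j₀)
    (hn : 0 < n) :
    ∀ s, s ≤ j₀ - 1 → ∀ a b : ℕ, a < b → b ≤ k * 2 ^ (j₀ - 1) → 2 ^ s ∣ b → b - a ≤ 2 ^ s →
    ssTerm q a b ≤ 1000 * dySum j₀ q (dyF k j₀ a b) := by
  intro s
  induction s with
  | zero =>
    intro hs a b hab hbn hd hba
    exact dyadic_base k j₀ q hk hj₀ hs (by omega) (by simpa using hd) hab hbn
  | succ s ih =>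
    intro hs a b hab hbn hd hba
    have hL : 0 < 2 ^ s := Nat.pow_pos (by norm_num)
    have hpow : 2 ^ (s + 1) = 2 * 2 ^ s := by rw [pow_succ]; ring
    by_cases heq : b - a = 2 ^ (s + 1)
    · exact dyadic_base k j₀ q hk hj₀ hs heq hd hab hbn
    · by_cases hsmall : b - a ≤ 2 ^ s
      · exact ih (by omega) a b hab hbn (dvd_trans (pow_dvd_pow 2 (by omega)) hd) hsmall
      · -- split :  m = b - 2^s ; rest [a, m) , block [m, b)
        set m := b - 2 ^ s with hm
        have h1 : a < m := by omega
        have h2 : m < b := by omega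
        have hstep := stepR q h1 h2 (by omega) hn
        have hdm : 2 ^ s ∣ m := Nat.dvd_sub (dvd_trans (pow_dvd_pow 2 (by omega)) hd) dvd_rfl
        have hrest := ih (by omega) a m h1 (by omega) hdm (by omega)
        -- block term
        set i := m / 2 ^ s with hi
        have hia : i * 2 ^ s = m := Nat.div_mul_cancel hdm
        have hib : (i + 1) * 2 ^ s = b := by rw [add_mul, one_mul, hia]; try omega
        set j := j₀ - 1 - s with hj
        have hjs : j₀ - 1 - j = s := by omega
        have hikey : i < k * 2 ^ j := by
          have hn' : k * 2 ^ (j₀ - 1) = k * 2 ^ j * 2 ^ s := by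
            rw [mul_assoc, ← pow_add]; congr 2; omega
          have h' : (i + 1) * 2 ^ s ≤ k * 2 ^ j * 2 ^ s := by rw [hib, ← hn']; exact hbn
          have := Nat.le_of_mul_le_mul_right h' hL
          omega
        have hmem : (⟨j, i⟩ : (_ : ℕ) × ℕ) ∈ dyF k j₀ a b := by
          rw [mem_dyF]
          dsimp only
          simp only [hjs]
          exact ⟨⟨by omega, hikey⟩, by omega, by omega⟩
        have hnotmem : (⟨j, i⟩ : (_ : ℕ) × ℕ) ∉ dyF k j₀ a m := by
          intro hmem'
          rw [mem_dyF] at hmem'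
          dsimp only at hmem'
          simp only [hjs] at hmem'
          omega
        have hterm : dyT q j₀ ⟨j, i⟩ = ssTerm q m b := by
          unfold dyT; simp only [hjs, hia, hib]
        have hins : dyT q j₀ ⟨j, i⟩ + dySum j₀ q (dyF k j₀ a m) ≤ dySum j₀ q (dyF k j₀ a b) := by
          have hsub : insert (⟨j, i⟩ : (_ : ℕ) × ℕ) (dyF k j₀ a m) ⊆ dyF k j₀ a b := by
            intro p hp
            rcases Finset.mem_insert.1 hp with h | h
            · rw [h]; exact hmem
            · exact dyF_subset k j₀ le_rfl h2.le h
          calc dyT q j₀ ⟨j, i⟩ + dySum j₀ q (dyF k j₀ a m)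
              = dySum j₀ q (insert ⟨j, i⟩ (dyF k j₀ a m)) := by
                simp only [dySum]
                rw [Finset.sum_insert hnotmem]
            _ ≤ _ := dySum_mono j₀ q hsub
        have hr0 := dySum_nonneg j₀ q (dyF k j₀ a m)
        have ht0 := ssTerm_nonneg q m b
        rw [← hterm] at hstep ht0
        linarith

/-- prefix of a dyadic block: `2^s ∣ a`, `b - a ≤ 2^s`. -/
lemma prefix_bound (k j₀ : ℕ) {n : ℕ} (q : Fin n → ℝ) (hk : 1 ≤ k) (hj₀ : 1 ≤ j₀)
    (hn : 0 < n) :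
    ∀ s, s ≤ j₀ - 1 → ∀ a b : ℕ, a < b → b ≤ k * 2 ^ (j₀ - 1) → 2 ^ s ∣ a → b - a ≤ 2 ^ s →
    ssTerm q a b ≤ 1000 * dySum j₀ q (dyF k j₀ a b) := by
  intro s
  induction s with
  | zero =>
    intro hs a b hab hbn hd hba
    exact dyadic_base k j₀ q hk hj₀ hs (by omega) (by simpa using Nat.one_dvd a) hab hbn
  | succ s ih =>
    intro hs a b hab hbn hd hba
    have hL : 0 < 2 ^ s := Nat.pow_pos (by norm_num)
    have hpow : 2 ^ (s + 1) = 2 * 2 ^ s := by rw [pow_succ]; ring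
    by_cases heq : b - a = 2 ^ (s + 1)
    · refine dyadic_base k j₀ q hk hj₀ hs heq ?_ hab hbn
      have : b = a + 2 ^ (s + 1) := by omega
      rw [this]
      exact Nat.dvd_add hd dvd_rfl
    · by_cases hsmall : b - a ≤ 2 ^ s
      · exact ih (by omega) a b hab hbn (dvd_trans (pow_dvd_pow 2 (by omega)) hd) hsmall
      · -- split : m = a + 2^s ; block [a, m) , rest [m, b)
        set m := a + 2 ^ s with hm
        have h1 : a < m := by omega
        have h2 : m < b := by omega
        have hstep := stepL q h1 h2 (by omega) hn
        have hdm : 2 ^ s ∣ m := Nat.dvd_add (dvd_trans (pow_dvd_pow 2 (by omega)) hd) dvd_rfl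
        have hrest := ih (by omega) m b h2 hbn hdm (by omega)
        -- block term [a, m)
        have hda : 2 ^ s ∣ a := dvd_trans (pow_dvd_pow 2 (by omega)) hd
        set i := a / 2 ^ s with hi
        have hia : i * 2 ^ s = a := Nat.div_mul_cancel hda
        have hib : (i + 1) * 2 ^ s = m := by rw [add_mul, one_mul, hia]; try omega
        set j := j₀ - 1 - s with hj
        have hjs : j₀ - 1 - j = s := by omega
        have hikey : i < k * 2 ^ j := by
          have hn' : k * 2 ^ (j₀ - 1) = k * 2 ^ j * 2 ^ s := by
            rw [mul_assoc, ← pow_add]; congr 2; omega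
          have h' : (i + 1) * 2 ^ s ≤ k * 2 ^ j * 2 ^ s := by
            rw [hib, ← hn']; omega
          have := Nat.le_of_mul_le_mul_right h' hL
          omega
        have hmem : (⟨j, i⟩ : (_ : ℕ) × ℕ) ∈ dyF k j₀ a b := by
          rw [mem_dyF]
          dsimp only
          simp only [hjs]
          exact ⟨⟨by omega, hikey⟩, by omega, by omega⟩
        have hnotmem : (⟨j, i⟩ : (_ : ℕ) × ℕ) ∉ dyF k j₀ m b := by
          intro hmem'
          rw [mem_dyF] at hmem'
          dsimp only at hmem'
          simp only [hjs] at hmem'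
          omega
        have hterm : dyT q j₀ ⟨j, i⟩ = ssTerm q a m := by
          unfold dyT; simp only [hjs, hia, hib]
        have hins : dyT q j₀ ⟨j, i⟩ + dySum j₀ q (dyF k j₀ m b) ≤ dySum j₀ q (dyF k j₀ a b) := by
          have hsub : insert (⟨j, i⟩ : (_ : ℕ) × ℕ) (dyF k j₀ m b) ⊆ dyF k j₀ a b := by
            intro p hp
            rcases Finset.mem_insert.1 hp with h | h
            · rw [h]; exact hmem
            · exact dyF_subset k j₀ h1.le le_rfl h
          calc dyT q j₀ ⟨j, i⟩ + dySum j₀ q (dyF k j₀ m b)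
              = dySum j₀ q (insert ⟨j, i⟩ (dyF k j₀ m b)) := by
                simp only [dySum]
                rw [Finset.sum_insert hnotmem]
            _ ≤ _ := dySum_mono j₀ q hsub
        have hr0 := dySum_nonneg j₀ q (dyF k j₀ m b)
        have ht0 := ssTerm_nonneg q a m
        rw [← hterm] at hstep ht0
        linarith

/-- interval contained in the size-`2^s` block of `a`. -/
lemma within_bound (k j₀ : ℕ) {n : ℕ} (q : Fin n → ℝ) (hk : 1 ≤ k) (hj₀ : 1 ≤ j₀)
    (hn : 0 < n) :
    ∀ s, s ≤ j₀ - 1 → ∀ a b : ℕ, a < b → b ≤ k * 2 ^ (j₀ - 1) →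
    b ≤ a / 2 ^ s * 2 ^ s + 2 ^ s →
    ssTerm q a b ≤ 2000 * dySum j₀ q (dyF k j₀ a b) := by
  intro s
  induction s with
  | zero =>
    intro hs a b hab hbn hloc
    simp only [pow_zero, Nat.div_one, mul_one] at hloc
    have h := dyadic_base k j₀ q hk hj₀ (Nat.zero_le _) (s := 0) (by omega)
      (by simpa using Nat.one_dvd b) hab hbn
    have h0 := dySum_nonneg j₀ q (dyF k j₀ a b)
    linarith
  | succ s ih =>
    intro hs a b hab hbn hloc
    have hL : 0 < 2 ^ s := Nat.pow_pos (by norm_num)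
    have hpow : 2 ^ (s + 1) = 2 * 2 ^ s := by rw [pow_succ]; ring
    set c := a / 2 ^ (s + 1) * 2 ^ (s + 1) with hc
    have hca : c ≤ a := Nat.div_mul_le_self _ _
    have hmod : c + a % 2 ^ (s + 1) = a := by
      rw [hc]; rw [mul_comm]; exact Nat.div_add_mod a (2 ^ (s + 1))
    have hmlt : a % 2 ^ (s + 1) < 2 ^ (s + 1) := Nat.mod_lt _ (by positivity)
    set m := c + 2 ^ s with hm
    have hdc : 2 ^ s ∣ c := Dvd.dvd.mul_left (pow_dvd_pow 2 (by omega)) _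
    have hdm : 2 ^ s ∣ m := Nat.dvd_add hdc dvd_rfl
    -- `a`'s level-`s` block start is at least `c`
    have hblk : c ≤ a / 2 ^ s * 2 ^ s := by
      have h1 : c / 2 ^ s ≤ a / 2 ^ s := Nat.div_le_div_right hca
      calc c = c / 2 ^ s * 2 ^ s := (Nat.div_mul_cancel hdc).symm
        _ ≤ a / 2 ^ s * 2 ^ s := Nat.mul_le_mul_right _ h1
    by_cases hbm : b ≤ m
    · -- left half
      apply ih (by omega) a b hab hbn
      omega
    · by_cases ham : m ≤ a
      · -- right half
        apply ih (by omega) a b hab hbn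
        have : m ≤ a / 2 ^ s * 2 ^ s := by
          have h1 : m / 2 ^ s ≤ a / 2 ^ s := Nat.div_le_div_right ham
          calc m = m / 2 ^ s * 2 ^ s := (Nat.div_mul_cancel hdm).symm
            _ ≤ a / 2 ^ s * 2 ^ s := Nat.mul_le_mul_right _ h1
        omega
      · -- split at m
        have h1 : a < m := by omega
        have h2 : m < b := by omega
        have hstep := stepM q h1 h2 hn
        have hsuf := suffix_bound k j₀ q hk hj₀ hn s (by omega) a m h1 (by omega) hdm (by omega)
        have hpre := prefix_bound k j₀ q hk hj₀ hn s (by omega) m b h2 hbn hdm (by omega)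
        have hun := dyF_union_le k j₀ q h1.le h2.le (a := a) (m := m) (b := b)
        have h0l := dySum_nonneg j₀ q (dyF k j₀ a m)
        have h0r := dySum_nonneg j₀ q (dyF k j₀ m b)
        linarith

/-- any interval of length at most `2^(j₀-1)`. -/
lemma top_bound (k j₀ : ℕ) {n : ℕ} (q : Fin n → ℝ) (hk : 1 ≤ k) (hj₀ : 1 ≤ j₀)
    (hn : 0 < n) {a b : ℕ} (hab : a < b) (hbn : b ≤ k * 2 ^ (j₀ - 1))
    (hlen : b - a ≤ 2 ^ (j₀ - 1)) :
    ssTerm q a b ≤ 2000 * dySum j₀ q (dyF k j₀ a b) := by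
  set c := a / 2 ^ (j₀ - 1) * 2 ^ (j₀ - 1) with hc
  have hca : c ≤ a := Nat.div_mul_le_self _ _
  have hmod : c + a % 2 ^ (j₀ - 1) = a := by
    rw [hc, mul_comm]; exact Nat.div_add_mod a (2 ^ (j₀ - 1))
  have hmlt : a % 2 ^ (j₀ - 1) < 2 ^ (j₀ - 1) := Nat.mod_lt _ (by positivity)
  set m := c + 2 ^ (j₀ - 1) with hm
  have hdm : 2 ^ (j₀ - 1) ∣ m := Nat.dvd_add (Dvd.dvd.mul_left dvd_rfl _) dvd_rfl
  by_cases hbm : b ≤ m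
  · exact within_bound k j₀ q hk hj₀ hn (j₀ - 1) le_rfl a b hab hbn (by omega)
  · have h1 : a < m := by omega
    have h2 : m < b := by omega
    have hstep := stepM q h1 h2 hn
    have hsuf := suffix_bound k j₀ q hk hj₀ hn (j₀ - 1) le_rfl a m h1 (by omega) hdm (by omega)
    have hpre := prefix_bound k j₀ q hk hj₀ hn (j₀ - 1) le_rfl m b h2 hbn hdm (by omega)
    have hun := dyF_union_le k j₀ q h1.le h2.le (a := a) (m := m) (b := b)
    have h0l := dySum_nonneg j₀ q (dyF k j₀ a m)
    have h0r := dySum_nonneg j₀ q (dyF k j₀ m b)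
    linarith


/-- **Proposition: the dyadic level sums dominate the scale-sensitive-`L2` distance.**
For `n = k·2^{j₀-1}`,
`‖q - U_n‖²_{[k]} ≤ 10⁸ · ∑_{j<j₀} ∑_{i<k·2^j} Discr(I_i^{(j)})² / width(I_i^{(j)})^{1/8}`,
where `I^{(j)}` is the partition of `[n]` into `k·2^j` equal consecutive intervals. -/
theorem scale_sensitive_le_level_sums (k j₀ : ℕ) (hk : 2 ≤ k) (hj₀ : 1 ≤ j₀)
    (q : Fin (k * 2 ^ (j₀ - 1)) → ℝ) (hq : IsDist q) :
    ssDistSq (k * 2 ^ (j₀ - 1)) k q ≤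
      10 ^ 8 * ∑ j ∈ Finset.range j₀, ∑ i ∈ Finset.range (k * 2 ^ j),
        ssTerm q (i * (k * 2 ^ (j₀ - 1) / (k * 2 ^ j)))
          ((i + 1) * (k * 2 ^ (j₀ - 1) / (k * 2 ^ j))) := by
  have hk1 : 1 ≤ k := by omega
  have hN : 0 < k * 2 ^ (j₀ - 1) := by positivity
  have hRHS : ∑ j ∈ Finset.range j₀, ∑ i ∈ Finset.range (k * 2 ^ j),
      ssTerm q (i * (k * 2 ^ (j₀ - 1) / (k * 2 ^ j)))
        ((i + 1) * (k * 2 ^ (j₀ - 1) / (k * 2 ^ j))) = dySum j₀ q (dyIdx k j₀) := by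
    rw [dySum, dyIdx, Finset.sum_sigma]
    apply Finset.sum_congr rfl
    intro j hj
    rw [Finset.mem_range] at hj
    have hdiv : k * 2 ^ (j₀ - 1) / (k * 2 ^ j) = 2 ^ (j₀ - 1 - j) := by
      have h' : k * 2 ^ (j₀ - 1) = k * 2 ^ j * 2 ^ (j₀ - 1 - j) := by
        rw [mul_assoc, ← pow_add]; congr 2; omega
      rw [h', Nat.mul_div_cancel_left _ (by positivity)]
    apply Finset.sum_congr rfl
    intro i _
    rw [hdiv]
    rfl
  rw [hRHS]
  have hIdx0 := dySum_nonneg j₀ q (dyIdx k j₀)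
  unfold ssDistSq
  apply Real.sSup_le
  · rintro x ⟨r, bd, hsm, h0, hl, hwid, rfl⟩
    have hsub : ∀ i : Fin r,
        ssTerm q (bd i.castSucc) (bd i.succ) ≤
          2000 * dySum j₀ q (dyF k j₀ (bd i.castSucc) (bd i.succ)) := by
      intro i
      have hlt : bd i.castSucc < bd i.succ := hsm (Fin.castSucc_lt_succ (i := i))
      have hub : bd i.succ ≤ k * 2 ^ (j₀ - 1) := by
        rw [← hl]; exact hsm.monotone (Fin.le_last _)
      have hlen : bd i.succ - bd i.castSucc ≤ 2 ^ (j₀ - 1) := by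
        have hw := hwid i
        rw [div_le_div_iff₀ (by exact_mod_cast hN) (by positivity)] at hw
        have hw' : ((bd i.succ - bd i.castSucc) * k : ℕ) ≤ (k * 2 ^ (j₀ - 1) : ℕ) := by
          have h'' : ((bd i.succ - bd i.castSucc : ℕ) : ℝ) * (k : ℕ) ≤ ((k * 2 ^ (j₀ - 1) : ℕ) : ℝ) := by
            push_cast at hw ⊢
            linarith
          exact_mod_cast h''
        rw [mul_comm] at hw'
        exact Nat.le_of_mul_le_mul_left hw' (by omega)
      exact top_bound k j₀ q hk1 hj₀ hN hlt hub hlen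
    have hdisj : (↑(Finset.univ : Finset (Fin r)) : Set (Fin r)).PairwiseDisjoint
        (fun i => dyF k j₀ (bd i.castSucc) (bd i.succ)) := by
      have key : ∀ i i' : Fin r, i < i' →
          Disjoint (dyF k j₀ (bd i.castSucc) (bd i.succ))
            (dyF k j₀ (bd i'.castSucc) (bd i'.succ)) := by
        intro i i' hii
        have hord : bd i.succ ≤ bd i'.castSucc := by
          apply hsm.monotone
          simp only [Fin.le_def, Fin.val_succ, Fin.coe_castSucc]
          exact hii
        rw [Finset.disjoint_left]
        intro p hp hp'
        rw [mem_dyF] at hp hp'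
        have hL : 0 < 2 ^ (j₀ - 1 - p.1) := Nat.pow_pos (by norm_num)
        have h' : (p.2 + 1) * 2 ^ (j₀ - 1 - p.1) ≤ p.2 * 2 ^ (j₀ - 1 - p.1) :=
          le_trans hp.2.2 (le_trans hord hp'.2.1)
        rw [add_mul, one_mul] at h'
        omega
      intro i _ i' _ hne
      rcases lt_or_gt_of_ne hne with h | h
      · exact key i i' h
      · exact (key i' i h).symm
    calc ∑ i : Fin r, ssTerm q (bd i.castSucc) (bd i.succ)
        ≤ ∑ i : Fin r, 2000 * dySum j₀ q (dyF k j₀ (bd i.castSucc) (bd i.succ)) :=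
          Finset.sum_le_sum fun i _ => hsub i
      _ = 2000 * ∑ i : Fin r, dySum j₀ q (dyF k j₀ (bd i.castSucc) (bd i.succ)) := by
          rw [Finset.mul_sum]
      _ = 2000 * dySum j₀ q ((Finset.univ : Finset (Fin r)).biUnion
            (fun i => dyF k j₀ (bd i.castSucc) (bd i.succ))) := by
          rw [dySum, Finset.sum_biUnion hdisj]
          rfl
      _ ≤ 2000 * dySum j₀ q (dyIdx k j₀) := by
          have := dySum_mono j₀ q (Finset.biUnion_subset.2
            (fun i _ => Finset.filter_subset _ _) :
            (Finset.univ : Finset (Fin r)).biUnion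
              (fun i => dyF k j₀ (bd i.castSucc) (bd i.succ)) ⊆ dyIdx k j₀)
          linarith
      _ ≤ 10 ^ 8 * dySum j₀ q (dyIdx k j₀) := by nlinarith
  · positivity
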